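/- Let θ > 0 and let h₁, h₂ : (0,∞) → (0,∞) be twice differentiable functions that extend continuously to 0 with finite right limits h₁(0⁺) and h₂(0⁺) satisfying h₁(0⁺) = h₂(0⁺). Define h(x,y) = e^{−θy}·h₁(x−y) for x > y > 0, h(x,y) = e^{−θx}·h₂(y−x) for 0 < x < y, and h(x,x) = e^{−θx}·h₁(0⁺) for x > 0. Then h is TP₂ on (0,∞)×(0,∞) if and only if (i) (h_i′(x))² ≥ h_i″(x)·h_i(x) for all x > 0 and i = 1, 2, and (ii) h₁(x)·h₂(x) ≤ h₁(0⁺)²·e^{−θx} for all x > 0. -/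

import Mathlib

open Real Set Filter Topology

/-- `K` is totally positive of order two on `S × T`. -/
def TP2 (K : ℝ → ℝ → ℝ) (S T : Set ℝ) : Prop :=
  ∀ x₁ ∈ S, ∀ x₂ ∈ S, ∀ y₁ ∈ T, ∀ y₂ ∈ T, x₁ < x₂ → y₁ < y₂ →
    K x₁ y₂ * K x₂ y₁ ≤ K x₁ y₁ * K x₂ y₂

lemma aux_deriv_nonpos {f : ℝ → ℝ} {x d : ℝ}
    (hf : HasDerivAt f d x) (h : ∀ y, x < y → f y ≤ f x) : d ≤ 0 := by
  have ht : Tendsto (slope f x) (𝓝[>] x) (𝓝 d) :=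
    (hasDerivAt_iff_tendsto_slope.1 hf).mono_left
      (nhdsWithin_mono x fun y hy => ne_of_gt hy)
  refine le_of_tendsto ht (eventually_nhdsWithin_of_forall fun y hy => ?_)
  rw [slope_def_field]
  exact div_nonpos_of_nonpos_of_nonneg (sub_nonpos.2 (h y hy)) (sub_pos.2 hy).le

section aux
variable {q q' q'' : ℝ → ℝ}
variable (hq : ∀ x : ℝ, 0 < x → 0 < q x)
variable (hd : ∀ x : ℝ, 0 < x → HasDerivAt q (q' x) x)
variable (hd' : ∀ x : ℝ, 0 < x → HasDerivAt q' (q'' x) x)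

include hq hd hd' in
lemma aux_ratio_hasDerivAt {x : ℝ} (hx : 0 < x) :
    HasDerivAt (fun t => q' t / q t) ((q'' x * q x - q' x * q' x) / q x ^ 2) x :=
  (hd' x hx).div (hd x hx) (hq x hx).ne'

include hq hd hd' in
lemma aux_ratio_anti (hcond : ∀ x : ℝ, 0 < x → q'' x * q x ≤ q' x ^ 2) :
    ∀ x y : ℝ, 0 < x → x < y → q' y / q y ≤ q' x / q x := by
  intro x y hx hxy
  have hcont : ContinuousOn (fun t => q' t / q t) (Icc x y) := fun t ht =>
    ((aux_ratio_hasDerivAt hq hd hd' (lt_of_lt_of_le hx ht.1)).continuousAt).continuousWithinAt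
  obtain ⟨ξ, hξ, hs⟩ := exists_hasDerivAt_eq_slope (fun t => q' t / q t)
    (fun t => (q'' t * q t - q' t * q' t) / q t ^ 2) hxy hcont
    (fun t ht => aux_ratio_hasDerivAt hq hd hd' (lt_trans hx ht.1))
  have hξ0 : 0 < ξ := lt_trans hx hξ.1
  have hnum : q'' ξ * q ξ - q' ξ * q' ξ ≤ 0 := by
    have := hcond ξ hξ0; nlinarith [this]
  have hden : (0:ℝ) < q ξ ^ 2 := pow_pos (hq ξ hξ0) 2
  have hle : (q' y / q y - q' x / q x) / (y - x) ≤ 0 := by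
    rw [← hs]; exact div_nonpos_of_nonpos_of_nonneg hnum hden.le
  have hyx : (0:ℝ) < y - x := sub_pos.2 hxy
  have h2 := (div_le_iff₀ hyx).1 hle
  rw [zero_mul] at h2
  linarith

include hq hd in
lemma aux_w_hasDerivAt (l : ℝ) {t : ℝ} (ht : 0 < t) :
    HasDerivAt (fun s => Real.log (q s) + l * s) (q' t / q t + l) t := by
  have h1 : HasDerivAt (fun s => Real.log (q s)) (q' t / q t) t :=
    (hd t ht).log (hq t ht).ne'
  have h2 : HasDerivAt (fun s : ℝ => l * s) (l * 1) t := (hasDerivAt_id t).const_mul l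
  have := h1.add h2; rw [mul_one] at this; exact this

include hq hd hd' in
lemma aux_chord (hcond : ∀ x : ℝ, 0 < x → q'' x * q x ≤ q' x ^ 2) (l : ℝ) :
    ∀ a u b : ℝ, 0 < a → a < u → u < b →
      (b - u) * (Real.log (q a) + l * a) + (u - a) * (Real.log (q b) + l * b)
        ≤ (b - a) * (Real.log (q u) + l * u) := by
  intro a u b ha hau hub
  set w : ℝ → ℝ := fun s => Real.log (q s) + l * s with hw
  have hu : 0 < u := lt_trans ha hau
  have hcont : ∀ s t : ℝ, 0 < s → ContinuousOn w (Icc s t) := fun s t hs r hr =>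
    ((aux_w_hasDerivAt hq hd l (lt_of_lt_of_le hs hr.1)).continuousAt).continuousWithinAt
  obtain ⟨ξ, hξ, hsξ⟩ := exists_hasDerivAt_eq_slope w (fun t => q' t / q t + l) hau
    (hcont a u ha) (fun t ht => aux_w_hasDerivAt hq hd l (lt_trans ha ht.1))
  obtain ⟨η, hη, hsη⟩ := exists_hasDerivAt_eq_slope w (fun t => q' t / q t + l) hub
    (hcont u b hu) (fun t ht => aux_w_hasDerivAt hq hd l (lt_trans hu ht.1))
  have hanti : q' η / q η ≤ q' ξ / q ξ :=
    aux_ratio_anti hq hd hd' hcond ξ η (lt_trans ha hξ.1) (lt_trans hξ.2 hη.1)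
  have h1 : (w b - w u) / (b - u) ≤ (w u - w a) / (u - a) := by
    rw [← hsξ, ← hsη]; linarith
  have hua : (0:ℝ) < u - a := sub_pos.2 hau
  have hbu : (0:ℝ) < b - u := sub_pos.2 hub
  rw [div_le_div_iff₀ hbu hua] at h1
  have ea : w a = Real.log (q a) + l * a := rfl
  have eu : w u = Real.log (q u) + l * u := rfl
  have eb : w b = Real.log (q b) + l * b := rfl
  rw [← ea, ← eu, ← eb]
  nlinarith [h1]

include hq hd hd' in
lemma aux_chord0 (hcond : ∀ x : ℝ, 0 < x → q'' x * q x ≤ q' x ^ 2) (l : ℝ)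
    {c : ℝ} (hc : 0 < c) (hlim : Tendsto q (𝓝[>] (0:ℝ)) (𝓝 c)) :
    ∀ u b : ℝ, 0 < u → u < b →
      (b - u) * Real.log c + u * (Real.log (q b) + l * b)
        ≤ b * (Real.log (q u) + l * u) := by
  intro u b hu hub
  have hwlim : Tendsto (fun ε => Real.log (q ε) + l * ε) (𝓝[>] (0:ℝ))
      (𝓝 (Real.log c + l * 0)) := by
    refine Tendsto.add ?_ ?_
    · exact ((Real.continuousAt_log hc.ne').tendsto.comp hlim)
    · exact ((continuous_const.mul continuous_id).tendsto 0).mono_left nhdsWithin_le_nhds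
  have hL : Tendsto (fun ε => (b - u) * (Real.log (q ε) + l * ε)
      + (u - ε) * (Real.log (q b) + l * b)) (𝓝[>] (0:ℝ))
      (𝓝 ((b - u) * (Real.log c + l * 0) + (u - 0) * (Real.log (q b) + l * b))) := by
    refine Tendsto.add (hwlim.const_mul _) ?_
    refine Tendsto.mul_const _ ?_
    exact (tendsto_const_nhds.sub (tendsto_id.mono_left nhdsWithin_le_nhds))
  have hR : Tendsto (fun ε : ℝ => (b - ε) * (Real.log (q u) + l * u)) (𝓝[>] (0:ℝ))
      (𝓝 ((b - 0) * (Real.log (q u) + l * u))) := by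
    refine Tendsto.mul_const _ ?_
    exact (tendsto_const_nhds.sub (tendsto_id.mono_left nhdsWithin_le_nhds))
  have hev : ∀ᶠ ε in 𝓝[>] (0:ℝ), (b - u) * (Real.log (q ε) + l * ε)
      + (u - ε) * (Real.log (q b) + l * b) ≤ (b - ε) * (Real.log (q u) + l * u) := by
    filter_upwards [Ioo_mem_nhdsGT_of_mem (Set.left_mem_Ico.2 hu)] with ε hε
    have := aux_chord hq hd hd' hcond l ε u b hε.1 hε.2 hub
    linarith
  have := le_of_tendsto_of_tendsto hL hR hev
  simpa using this

include hq hd hd' in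
lemma aux_cond_of_fourpoint
    (H : ∀ s α β : ℝ, 0 < s → 0 < α → 0 < β →
      Real.log (q s) + Real.log (q (s + α + β)) ≤ Real.log (q (s + α)) + Real.log (q (s + β))) :
    ∀ x : ℝ, 0 < x → q'' x * q x ≤ q' x ^ 2 := by
  have hanti : ∀ t₁ t₂ : ℝ, 0 < t₁ → t₁ < t₂ → q' t₂ / q t₂ ≤ q' t₁ / q t₁ := by
    intro t₁ t₂ ht₁ h12
    set δ := t₂ - t₁ with hδ
    have hδ0 : 0 < δ := sub_pos.2 h12
    have hF : HasDerivAt (fun y => Real.log (q (y + δ)) - Real.log (q y))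
        (q' (t₁ + δ) / q (t₁ + δ) - q' t₁ / q t₁) t₁ := by
      have hg : HasDerivAt (fun y : ℝ => y + δ) 1 t₁ := (hasDerivAt_id t₁).add_const δ
      have h1 : HasDerivAt (fun y => Real.log (q (y + δ))) (q' (t₁ + δ) / q (t₁ + δ) * 1) t₁ := by
        have hf : HasDerivAt (fun z => Real.log (q z)) (q' (t₁ + δ) / q (t₁ + δ)) (t₁ + δ) :=
          (hd _ (by linarith)).log (hq _ (by linarith)).ne'
        exact hf.comp t₁ hg
      have h2 : HasDerivAt (fun y => Real.log (q y)) (q' t₁ / q t₁) t₁ :=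
        (hd _ ht₁).log (hq _ ht₁).ne'
      have := h1.sub h2; rw [mul_one] at this; exact this
    have hmono : ∀ y, t₁ < y → Real.log (q (y + δ)) - Real.log (q y)
        ≤ Real.log (q (t₁ + δ)) - Real.log (q t₁) := by
      intro y hy
      have := H t₁ δ (y - t₁) ht₁ hδ0 (sub_pos.2 hy)
      have e1 : t₁ + δ + (y - t₁) = y + δ := by ring
      have e2 : t₁ + (y - t₁) = y := by ring
      rw [e1, e2] at this
      linarith
    have := aux_deriv_nonpos hF hmono
    have e : t₁ + δ = t₂ := by ring
    rw [e] at this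
    linarith
  intro x hx
  have hder := aux_ratio_hasDerivAt hq hd hd' hx
  have hle : (q'' x * q x - q' x * q' x) / q x ^ 2 ≤ 0 :=
    aux_deriv_nonpos hder (fun y hy => hanti x y hx hy)
  have hden : (0:ℝ) < q x ^ 2 := pow_pos (hq x hx) 2
  have h2 := (div_le_iff₀ hden).1 hle
  rw [zero_mul] at h2
  nlinarith [h2]

end aux

theorem blm_density_tp2_iff (θ : ℝ) (hθ : 0 < θ)
    (h₁ h₂ h₁' h₂' h₁'' h₂'' : ℝ → ℝ)
    (h₁pos : ∀ x : ℝ, 0 < x → 0 < h₁ x) (h₂pos : ∀ x : ℝ, 0 < x → 0 < h₂ x)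
    (hd₁ : ∀ x : ℝ, 0 < x → HasDerivAt h₁ (h₁' x) x)
    (hd₁' : ∀ x : ℝ, 0 < x → HasDerivAt h₁' (h₁'' x) x)
    (hd₂ : ∀ x : ℝ, 0 < x → HasDerivAt h₂ (h₂' x) x)
    (hd₂' : ∀ x : ℝ, 0 < x → HasDerivAt h₂' (h₂'' x) x)
    (c : ℝ)
    (hlim₁ : Tendsto h₁ (nhdsWithin 0 (Ioi 0)) (nhds c))
    (hlim₂ : Tendsto h₂ (nhdsWithin 0 (Ioi 0)) (nhds c))
    (h : ℝ → ℝ → ℝ)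
    (hgt : ∀ x y : ℝ, 0 < y → y < x → h x y = Real.exp (-θ * y) * h₁ (x - y))
    (hlt : ∀ x y : ℝ, 0 < x → x < y → h x y = Real.exp (-θ * x) * h₂ (y - x))
    (heq : ∀ x : ℝ, 0 < x → h x x = Real.exp (-θ * x) * c) :
    TP2 h (Ioi 0) (Ioi 0) ↔
      ((∀ x : ℝ, 0 < x → h₁'' x * h₁ x ≤ (h₁' x) ^ 2) ∧
        (∀ x : ℝ, 0 < x → h₂'' x * h₂ x ≤ (h₂' x) ^ 2) ∧
        ∀ x : ℝ, 0 < x → h₁ x * h₂ x ≤ c ^ 2 * Real.exp (-θ * x)) := by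
  have hc0 : 0 ≤ c :=
    ge_of_tendsto hlim₁ (eventually_nhdsWithin_of_forall fun x hx => (h₁pos x hx).le)
  rcases eq_or_lt_of_le hc0 with hc | hc
  · -- degenerate case c = 0 : both sides false
    refine iff_of_false ?_ ?_
    · intro tp2
      have h12 := tp2 1 (mem_Ioi.2 one_pos) 2 (mem_Ioi.2 two_pos) 1 (mem_Ioi.2 one_pos)
        2 (mem_Ioi.2 two_pos) one_lt_two one_lt_two
      rw [hlt 1 2 one_pos one_lt_two, hgt 2 1 one_pos one_lt_two, heq 1 one_pos,
        heq 2 two_pos, ← hc] at h12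
      have e : (2:ℝ) - 1 = 1 := by norm_num
      rw [e, mul_zero, mul_zero, zero_mul] at h12
      have hpos : 0 < Real.exp (-θ * 1) * h₂ 1 * (Real.exp (-θ * 1) * h₁ 1) := by
        have := h₁pos 1 one_pos
        have := h₂pos 1 one_pos
        positivity
      linarith
    · rintro ⟨-, -, h3⟩
      have := h3 1 one_pos
      rw [← hc] at this
      have hpos : 0 < h₁ 1 * h₂ 1 := mul_pos (h₁pos 1 one_pos) (h₂pos 1 one_pos)
      have : h₁ 1 * h₂ 1 ≤ 0 := by simpa using this
      linarith
  · -- main case 0 < c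
    set m : ℝ → ℝ := fun t => if 0 < t then Real.log (h₁ t) + θ/2 * t
      else if t < 0 then Real.log (h₂ (-t)) + θ/2 * (-t) else Real.log c with hm
    have mpos : ∀ t : ℝ, 0 < t → m t = Real.log (h₁ t) + θ/2 * t := by
      intro t ht; simp [hm, ht]
    have mneg : ∀ t : ℝ, t < 0 → m t = Real.log (h₂ (-t)) + θ/2 * (-t) := by
      intro t ht; simp [hm, ht, ht.not_gt]
    have mzero : m 0 = Real.log c := by simp [hm]
    have hrep : ∀ x y : ℝ, 0 < x → 0 < y →
        h x y = Real.exp (-(θ*(x+y))/2 + m (x-y)) := by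
      intro x y hx hy
      rcases lt_trichotomy x y with hxy | hxy | hxy
      · rw [hlt x y hx hxy, mneg _ (by linarith : x - y < 0),
          show -(x - y) = y - x from by ring,
          show -(θ*(x+y))/2 + (Real.log (h₂ (y-x)) + θ/2 * (y-x))
            = -θ*x + Real.log (h₂ (y-x)) from by ring,
          Real.exp_add, Real.exp_log (h₂pos _ (by linarith))]
      · subst hxy
        rw [heq x hx, sub_self, mzero,
          show -(θ*(x+x))/2 + Real.log c = -θ*x + Real.log c from by ring,
          Real.exp_add, Real.exp_log hc]
      · rw [hgt x y hy hxy, mpos _ (by linarith : 0 < x - y),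
          show -(θ*(x+y))/2 + (Real.log (h₁ (x-y)) + θ/2 * (x-y))
            = -θ*y + Real.log (h₁ (x-y)) from by ring,
          Real.exp_add, Real.exp_log (h₁pos _ (by linarith))]
    have FP_of_tp2 : TP2 h (Ioi 0) (Ioi 0) →
        ∀ s α β : ℝ, 0 < α → 0 < β → m s + m (s+α+β) ≤ m (s+α) + m (s+β) := by
      intro tp2 s α β hα hβ
      set y₁ : ℝ := |s| + 1 with hy₁def
      have hy₁0 : 0 < y₁ := by positivity
      have habs := neg_abs_le s
      have hx₁0 : 0 < y₁ + β + s := by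
        rw [hy₁def]; linarith
      have key := tp2 (y₁ + β + s) (mem_Ioi.2 hx₁0) (y₁ + β + s + α) (mem_Ioi.2 (by linarith))
        y₁ (mem_Ioi.2 hy₁0) (y₁ + β) (mem_Ioi.2 (by linarith)) (by linarith) (by linarith)
      rw [hrep (y₁ + β + s) (y₁ + β) hx₁0 (by linarith),
        hrep (y₁ + β + s + α) y₁ (by linarith) hy₁0,
        hrep (y₁ + β + s) y₁ hx₁0 hy₁0,
        hrep (y₁ + β + s + α) (y₁ + β) (by linarith) (by linarith),
        ← Real.exp_add, ← Real.exp_add, Real.exp_le_exp] at key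
      rw [show y₁ + β + s - (y₁ + β) = s from by ring,
        show y₁ + β + s + α - y₁ = s + α + β from by ring,
        show y₁ + β + s - y₁ = s + β from by ring,
        show y₁ + β + s + α - (y₁ + β) = s + α from by ring] at key
      linarith
    have tp2_of_FP : (∀ s α β : ℝ, 0 < α → 0 < β → m s + m (s+α+β) ≤ m (s+α) + m (s+β)) →
        TP2 h (Ioi 0) (Ioi 0) := by
      intro FP x₁ hx₁ x₂ hx₂ y₁ hy₁ y₂ hy₂ hx hy
      rw [mem_Ioi] at hx₁ hx₂ hy₁ hy₂
      have key := FP (x₁ - y₂) (x₂ - x₁) (y₂ - y₁) (sub_pos.2 hx) (sub_pos.2 hy)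
      rw [show x₁ - y₂ + (x₂ - x₁) + (y₂ - y₁) = x₂ - y₁ from by ring,
        show x₁ - y₂ + (x₂ - x₁) = x₂ - y₂ from by ring,
        show x₁ - y₂ + (y₂ - y₁) = x₁ - y₁ from by ring] at key
      rw [hrep _ _ hx₁ hy₂, hrep _ _ hx₂ hy₁, hrep _ _ hx₁ hy₁, hrep _ _ hx₂ hy₂,
        ← Real.exp_add, ← Real.exp_add, Real.exp_le_exp]
      linarith
    have conds_of_FP : (∀ s α β : ℝ, 0 < α → 0 < β → m s + m (s+α+β) ≤ m (s+α) + m (s+β)) →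
        ((∀ x : ℝ, 0 < x → h₁'' x * h₁ x ≤ (h₁' x) ^ 2) ∧
          (∀ x : ℝ, 0 < x → h₂'' x * h₂ x ≤ (h₂' x) ^ 2) ∧
          ∀ x : ℝ, 0 < x → h₁ x * h₂ x ≤ c ^ 2 * Real.exp (-θ * x)) := by
      intro FP
      refine ⟨?_, ?_, ?_⟩
      · refine aux_cond_of_fourpoint h₁pos hd₁ hd₁' ?_
        intro s α β hs hα hβ
        have key := FP s α β hα hβ
        rw [mpos _ hs, mpos _ (by linarith), mpos _ (by linarith), mpos _ (by linarith)] at key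
        linarith
      · refine aux_cond_of_fourpoint h₂pos hd₂ hd₂' ?_
        intro s α β hs hα hβ
        have key := FP (-(s+α+β)) α β hα hβ
        rw [show -(s+α+β) + α + β = -s from by ring,
          show -(s+α+β) + α = -(s+β) from by ring,
          show -(s+α+β) + β = -(s+α) from by ring] at key
        rw [mneg _ (by linarith : -(s+α+β) < 0), mneg _ (by linarith : -s < 0),
          mneg _ (by linarith : -(s+β) < 0), mneg _ (by linarith : -(s+α) < 0),
          neg_neg, neg_neg, neg_neg, neg_neg] at key
        linarith
      · intro x hx
        have key := FP (-x) x x hx hx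
        rw [show -x + x + x = x from by ring, show -x + x = (0:ℝ) from by ring,
          mzero, mneg _ (by linarith : -x < 0), mpos _ hx, neg_neg] at key
        have e1 : h₁ x * h₂ x * Real.exp (θ*x)
            = Real.exp (Real.log (h₁ x) + Real.log (h₂ x) + θ*x) := by
          rw [Real.exp_add, Real.exp_add, Real.exp_log (h₁pos x hx), Real.exp_log (h₂pos x hx)]
        have e2 : (c:ℝ)^2 = Real.exp (Real.log c + Real.log c) := by
          rw [Real.exp_add, Real.exp_log hc]; ring
        have key3 : h₁ x * h₂ x * Real.exp (θ*x) ≤ c^2 := by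
          rw [e1, e2]; exact Real.exp_le_exp.2 (by linarith)
        rw [show -θ * x = -(θ*x) from by ring, Real.exp_neg, ← div_eq_mul_inv,
          le_div_iff₀ (Real.exp_pos _)]
        exact key3
    have FP_of_conds : ((∀ x : ℝ, 0 < x → h₁'' x * h₁ x ≤ (h₁' x) ^ 2) ∧
          (∀ x : ℝ, 0 < x → h₂'' x * h₂ x ≤ (h₂' x) ^ 2) ∧
          ∀ x : ℝ, 0 < x → h₁ x * h₂ x ≤ c ^ 2 * Real.exp (-θ * x)) →
        ∀ s α β : ℝ, 0 < α → 0 < β → m s + m (s+α+β) ≤ m (s+α) + m (s+β) := by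
      rintro ⟨c1, c2, c3⟩
      have mSym : ∀ x : ℝ, 0 < x → m x + m (-x) ≤ 2 * Real.log c := by
        intro x hx
        rw [mpos _ hx, mneg _ (by linarith : -x < 0), neg_neg]
        have h3 := c3 x hx
        have l1 : Real.log (h₁ x * h₂ x) ≤ Real.log (c^2 * Real.exp (-θ*x)) :=
          Real.log_le_log (mul_pos (h₁pos x hx) (h₂pos x hx)) h3
        rw [Real.log_mul (h₁pos x hx).ne' (h₂pos x hx).ne',
          Real.log_mul (pow_pos hc 2).ne' (Real.exp_ne_zero _), Real.log_exp,
          Real.log_pow] at l1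
        push_cast at l1
        linarith
      have CP : ∀ a u b : ℝ, 0 ≤ a → a < u → u < b →
          (b-u) * m a + (u-a) * m b ≤ (b-a) * m u := by
        intro a u b ha hau hub
        have hu : 0 < u := lt_of_le_of_lt ha hau
        have hb : 0 < b := lt_trans hu hub
        rcases eq_or_lt_of_le ha with ha0 | ha0
        · subst ha0
          rw [mzero, sub_zero, sub_zero, mpos _ hu, mpos _ hb]
          exact aux_chord0 h₁pos hd₁ hd₁' c1 (θ/2) hc hlim₁ u b hu hub
        · rw [mpos _ ha0, mpos _ hu, mpos _ hb]
          exact aux_chord h₁pos hd₁ hd₁' c1 (θ/2) a u b ha0 hau hub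
      have CN : ∀ a u b : ℝ, b ≤ 0 → a < u → u < b →
          (b-u) * m a + (u-a) * m b ≤ (b-a) * m u := by
        intro a u b hb hau hub
        have hu : u < 0 := lt_of_lt_of_le hub hb
        have ha : a < 0 := lt_trans hau hu
        rcases eq_or_lt_of_le hb with hb0 | hb0
        · subst hb0
          rw [mzero, mneg _ ha, mneg _ hu]
          have := aux_chord0 h₂pos hd₂ hd₂' c2 (θ/2) hc hlim₂ (-u) (-a)
            (by linarith) (by linarith)
          linarith
        · rw [mneg _ ha, mneg _ hu, mneg _ hb0]
          have := aux_chord h₂pos hd₂ hd₂' c2 (θ/2) (-b) (-u) (-a)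
            (by linarith) (by linarith) (by linarith)
          linarith
      have TZ : ∀ a b : ℝ, a < 0 → 0 < b →
          b * m a + (-a) * m b ≤ (b - a) * Real.log c := by
        intro a b ha hb
        rcases lt_trichotomy (-a) b with hab | hab | hab
        · have hca := CP 0 (-a) b le_rfl (by linarith) hab
          rw [mzero, sub_zero, sub_zero] at hca
          have hs := mSym (-a) (by linarith)
          rw [neg_neg] at hs
          have hmul := mul_le_mul_of_nonneg_left hs hb.le
          nlinarith [hca, hmul]
        · have hs := mSym b hb
          have hmul := mul_le_mul_of_nonneg_left hs hb.le
          have ea : a = -b := by linarith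
          rw [ea]
          nlinarith [hmul]
        · have hcb := CN a (-b) 0 le_rfl (by linarith) (by linarith)
          rw [mzero] at hcb
          have hs := mSym b hb
          have hmul := mul_le_mul_of_nonneg_left hs (by linarith : (0:ℝ) ≤ -a)
          nlinarith [hcb, hmul]
      have MC : ∀ a u b : ℝ, a < u → u < b →
          (b-u) * m a + (u-a) * m b ≤ (b-a) * m u := by
        intro a u b hau hub
        rcases le_or_gt 0 a with ha | ha
        · exact CP a u b ha hau hub
        rcases le_or_gt b 0 with hb | hb
        · exact CN a u b hb hau hub
        rcases lt_trichotomy u 0 with hu | hu | hu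
        · have h4 := CN a u 0 le_rfl hau hu
          rw [mzero] at h4
          have h5 := TZ a b ha hb
          have h6 := mul_le_mul_of_nonneg_left h4 (by linarith : (0:ℝ) ≤ b - a)
          have h7 := mul_le_mul_of_nonneg_left h5 (by linarith : (0:ℝ) ≤ u - a)
          have h8 : (-a) * ((b-u) * m a + (u-a) * m b) ≤ (-a) * ((b-a) * m u) := by
            nlinarith [h6, h7]
          exact le_of_mul_le_mul_left h8 (by linarith)
        · subst hu
          rw [mzero, sub_zero, zero_sub]
          have := TZ a b ha hb
          linarith
        · have h4 := CP 0 u b le_rfl hu hub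
          rw [mzero, sub_zero, sub_zero] at h4
          have h5 := TZ a b ha hb
          have h6 := mul_le_mul_of_nonneg_left h4 (by linarith : (0:ℝ) ≤ b - a)
          have h7 := mul_le_mul_of_nonneg_left h5 (by linarith : (0:ℝ) ≤ b - u)
          have h8 : b * ((b-u) * m a + (u-a) * m b) ≤ b * ((b-a) * m u) := by
            nlinarith [h6, h7]
          exact le_of_mul_le_mul_left h8 hb
      intro s α β hα hβ
      have h1 := MC s (s+α) (s+α+β) (by linarith) (by linarith)
      have h2 := MC s (s+β) (s+α+β) (by linarith) (by linarith)
      rw [show s+α+β-(s+α) = β from by ring, show s+α-s = α from by ring,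
        show s+α+β-s = α+β from by ring] at h1
      rw [show s+α+β-(s+β) = α from by ring, show s+β-s = β from by ring,
        show s+α+β-s = α+β from by ring] at h2
      have h3 : (α+β) * (m s + m (s+α+β)) ≤ (α+β) * (m (s+α) + m (s+β)) := by
        nlinarith [h1, h2]
      exact le_of_mul_le_mul_left h3 (by linarith)
    constructor
    · intro tp2; exact conds_of_FP (FP_of_tp2 tp2)
    · intro conds; exact tp2_of_FP (FP_of_conds conds)
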